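/- Let Ω be a smooth m-dimensional manifold and let k ≥ 2(m+n). Then there exists a smooth map G : Ω → M(n,k) (into n×k real matrices) such that for every pair of distinct points ω ≠ ω' in Ω, the (2n × k) matrix obtained by stacking G(ω) on top of G(ω') has full rank 2n. -/

import Mathlib

open Set Manifold Module
open scoped NNReal ENNReal

noncomputable section

universe u v w

def zext {d : ℕ} (z : EuclideanSpace ℝ (Fin d)) (l : ℕ) : ℝ :=
  if h : l < d then z ⟨l, h⟩ else 0

lemma zext_sub {d : ℕ} (z z' : EuclideanSpace ℝ (Fin d)) (l : ℕ) :
    zext (z - z') l = zext z l - zext z' l := by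
  unfold zext; split <;> simp [PiLp.sub_apply]

lemma contDiff_zext {d : ℕ} (l : ℕ) :
    ContDiff ℝ ⊤ (fun z : EuclideanSpace ℝ (Fin d) => zext z l) := by
  by_cases h : l < d
  · simp only [zext, dif_pos h]
    exact (EuclideanSpace.proj (𝕜 := ℝ) (⟨l, h⟩ : Fin d)).contDiff
  · simp only [zext, dif_neg h]
    exact contDiff_const

def gmat (n k d : ℕ) (z : EuclideanSpace ℝ (Fin d)) : Fin n → Fin k → ℝ :=
  fun i j =>
    if (j : ℕ) < n then (if (j : ℕ) = (i : ℕ) then 1 else 0)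
    else if (j : ℕ) - n < (i : ℕ) then 0 else zext z ((j : ℕ) - n - (i : ℕ))

lemma contDiff_gmat (n k d : ℕ) : ContDiff ℝ ⊤ (gmat n k d) := by
  rw [contDiff_pi]
  intro i
  rw [contDiff_pi]
  intro j
  unfold gmat
  split
  · exact contDiff_const
  · split
    · exact contDiff_const
    · exact contDiff_zext _

lemma gmat_li {n k d : ℕ} (hk : 2 * n + d - 1 ≤ k) (hd : 0 < d)
    {z z' : EuclideanSpace ℝ (Fin d)} (hzz : z ≠ z') :
    LinearIndependent ℝ (Sum.elim (gmat n k d z) (gmat n k d z')) := by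
  have hnk : n ≤ k := by omega
  rw [Fintype.linearIndependent_iff]
  intro g hg
  have hcol : ∀ j : Fin k, (∑ i : Fin n, g (Sum.inl i) * gmat n k d z i j)
      + (∑ i : Fin n, g (Sum.inr i) * gmat n k d z' i j) = 0 := by
    intro j
    have h1 := congrFun hg j
    rw [Finset.sum_apply] at h1
    simpa [Fintype.sum_sum_type] using h1
  have hab : ∀ i : Fin n, g (Sum.inr i) = - g (Sum.inl i) := by
    intro i
    have hi : (i : ℕ) < k := lt_of_lt_of_le i.2 hnk
    have h2 := hcol ⟨i, hi⟩
    have key : ∀ w : EuclideanSpace ℝ (Fin d), ∀ i' : Fin n,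
        gmat n k d w i' ⟨(i : ℕ), hi⟩ = if i = i' then 1 else 0 := by
      intro w i'
      simp [gmat, i.2, Fin.val_inj]
    simp only [key, mul_ite, mul_one, mul_zero, Finset.sum_ite_eq, Finset.mem_univ,
      if_true] at h2
    linarith
  -- reduced band equations
  set u : EuclideanSpace ℝ (Fin d) := z - z' with hu
  have hu0 : u ≠ 0 := sub_ne_zero.2 hzz
  have hband : ∀ c : ℕ, (hc : n + c < k) →
      (∑ i : Fin n, g (Sum.inl i) * (if c < (i : ℕ) then 0 else zext u (c - i))) = 0 := by
    intro c hc
    have h2 := hcol ⟨n + c, hc⟩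
    have key : ∀ w : EuclideanSpace ℝ (Fin d), ∀ i' : Fin n,
        gmat n k d w i' ⟨n + c, hc⟩ = if c < (i' : ℕ) then 0 else zext w (c - i') := by
      intro w i'
      have h3 : ¬ (n + c < n) := by omega
      have h4 : n + c - n = c := by omega
      simp [gmat, h3, h4]
    simp only [key, hab] at h2
    rw [← Finset.sum_add_distrib] at h2
    calc ∑ i : Fin n, g (Sum.inl i) * (if c < (i : ℕ) then 0 else zext u (c - i))
        = ∑ x : Fin n, ((g (Sum.inl x) * if c < (x : ℕ) then 0 else zext z (c - x)) +
            (-g (Sum.inl x)) * if c < (x : ℕ) then 0 else zext z' (c - x)) := by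
          apply Finset.sum_congr rfl
          intro x _
          by_cases h : c < (x : ℕ)
          · simp [h]
          · simp only [if_neg h, hu, zext_sub]
            ring
      _ = 0 := h2
  -- show g (inl i) = 0 for all i
  have hA : ∀ i : Fin n, g (Sum.inl i) = 0 := by
    by_contra hcon
    push_neg at hcon
    obtain ⟨iw, hiw⟩ := hcon
    classical
    set S : Finset (Fin n) := Finset.univ.filter (fun i => g (Sum.inl i) ≠ 0) with hS
    have hSne : S.Nonempty := ⟨iw, by simp [hS, hiw]⟩
    set i0 : Fin n := S.max' hSne with hi0
    have hi0mem : g (Sum.inl i0) ≠ 0 := by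
      have := S.max'_mem hSne
      simpa [hS] using this
    have hi0max : ∀ i : Fin n, g (Sum.inl i) ≠ 0 → i ≤ i0 := by
      intro i hi
      exact S.le_max' i (by simp [hS, hi])
    set T : Finset (Fin d) := Finset.univ.filter (fun t => u t ≠ 0) with hT
    have hex : ∃ t, u t ≠ 0 := by
      by_contra h
      push_neg at h
      exact hu0 (by ext t; exact h t)
    have hTne : T.Nonempty := by
      obtain ⟨t, ht⟩ := hex
      exact ⟨t, by simp [hT, ht]⟩
    set l0 : Fin d := T.max' hTne with hl0
    have hl0mem : u l0 ≠ 0 := by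
      have := T.max'_mem hTne
      simpa [hT] using this
    have hl0max : ∀ t : Fin d, u t ≠ 0 → t ≤ l0 := by
      intro t ht
      exact T.le_max' t (by simp [hT, ht])
    have hc : n + ((i0 : ℕ) + (l0 : ℕ)) < k := by
      have := i0.2; have := l0.2; omega
    have h5 := hband ((i0 : ℕ) + (l0 : ℕ)) hc
    rw [Finset.sum_eq_single i0] at h5
    · have h6 : ¬ ((i0 : ℕ) + (l0 : ℕ) < (i0 : ℕ)) := by omega
      have h7 : (i0 : ℕ) + (l0 : ℕ) - (i0 : ℕ) = (l0 : ℕ) := by omega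
      rw [if_neg h6, h7] at h5
      have h8 : zext u (l0 : ℕ) = u l0 := by simp [zext, l0.2]
      rw [h8] at h5
      exact hi0mem (by
        rcases mul_eq_zero.1 h5 with h | h
        · exact h
        · exact absurd h hl0mem)
    · intro i _ hne
      by_cases ha : g (Sum.inl i) = 0
      · rw [ha]; ring
      · have hile : i ≤ i0 := hi0max i ha
        have hilt : (i : ℕ) < (i0 : ℕ) := lt_of_le_of_ne (Fin.le_def.1 hile)
          (fun h => hne (Fin.ext h))
        have h6 : ¬ ((i0 : ℕ) + (l0 : ℕ) < (i : ℕ)) := by omega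
        rw [if_neg h6]
        have h7 : (l0 : ℕ) < (i0 : ℕ) + (l0 : ℕ) - (i : ℕ) := by omega
        have h8 : zext u ((i0 : ℕ) + (l0 : ℕ) - (i : ℕ)) = 0 := by
          unfold zext
          split
          · rename_i hlt
            by_contra h9
            have := hl0max ⟨_, hlt⟩ h9
            rw [Fin.le_def] at this
            simp at this
            omega
          · rfl
        rw [h8]; ring
    · intro h
      exact absurd (Finset.mem_univ i0) h
  intro i
  rcases i with i | i
  · exact hA i
  · rw [hab i, hA i, neg_zero]

lemma gmat_rank {n k d : ℕ} (hk : 2 * n + d - 1 ≤ k) (hd : 0 < d)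
    {z z' : EuclideanSpace ℝ (Fin d)} (hzz : z ≠ z') :
    (Matrix.of (Sum.elim (gmat n k d z) (gmat n k d z'))).rank = 2 * n := by
  have h := (gmat_li hk hd hzz).rank_matrix (M := Matrix.of (Sum.elim (gmat n k d z) (gmat n k d z')))
  rw [h]
  simp [two_mul]


/-- `X` is covered by countably many Lipschitz images (bounded by 1 in norm) of subsets of
`ℝ^c`. -/
def LipPieces (c : ℕ) {V : Type u} [NormedAddCommGroup V] (X : Set V) : Prop :=
  ∃ (ι : Type) (_ : Countable ι) (A : ι → Set (EuclideanSpace ℝ (Fin c)))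
    (g : ι → EuclideanSpace ℝ (Fin c) → V) (K : ι → ℝ≥0),
    (∀ i, LipschitzOnWith (K i) (g i) (A i)) ∧ (∀ i, ∀ a ∈ A i, ‖g i a‖ ≤ 1) ∧
    X ⊆ ⋃ i, g i '' (A i)

lemma LipPieces.dimH_le {c : ℕ} {V : Type u} [NormedAddCommGroup V] {X : Set V}
    (h : LipPieces c X) : dimH X ≤ c := by
  obtain ⟨ι, hι, A, g, K, hLip, hB, hcov⟩ := h
  calc dimH X ≤ dimH (⋃ i, g i '' (A i)) := dimH_mono hcov
    _ = ⨆ i, dimH (g i '' (A i)) := dimH_iUnion _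
    _ ≤ (c : ℝ≥0∞) := by
        apply iSup_le
        intro i
        calc dimH (g i '' (A i)) ≤ dimH (A i) := (hLip i).dimH_image_le
          _ ≤ dimH (univ : Set (EuclideanSpace ℝ (Fin c))) := dimH_mono (subset_univ _)
          _ = (c : ℝ≥0∞) := by
              rw [Real.dimH_univ_eq_finrank, finrank_euclideanSpace_fin]

/-- the set of normalized secant directions of `s` -/
def usec {V : Type u} [NormedAddCommGroup V] [NormedSpace ℝ V] (s : Set V) : Set V :=
  {w | ∃ x ∈ s, ∃ y ∈ s, x ≠ y ∧ w = ‖x - y‖⁻¹ • (x - y)}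

lemma norm_normalize_le {V : Type u} [NormedAddCommGroup V] [NormedSpace ℝ V] (w : V) :
    ‖‖w‖⁻¹ • w‖ ≤ 1 := by
  rcases eq_or_ne w 0 with h | h
  · simp [h]
  · rw [norm_smul, norm_inv, norm_norm, inv_mul_cancel₀ (norm_ne_zero_iff.2 h)]

lemma normalize_smul_pos {V : Type u} [NormedAddCommGroup V] [NormedSpace ℝ V]
    {c : ℝ} (hc : 0 < c) (v : V) : ‖c • v‖⁻¹ • (c • v) = ‖v‖⁻¹ • v := by
  rcases eq_or_ne v 0 with h | h
  · simp [h]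
  · rw [norm_smul, Real.norm_eq_abs, abs_of_pos hc, smul_smul]
    have hkey : (c * ‖v‖)⁻¹ * c = ‖v‖⁻¹ := by
      rw [mul_inv, mul_comm c⁻¹ _, mul_assoc, inv_mul_cancel₀ hc.ne', mul_one]
    rw [hkey]

lemma lipschitzOnWith_normalize {V : Type u} [NormedAddCommGroup V] [NormedSpace ℝ V]
    {ε : ℝ≥0} (hε : 0 < ε) :
    LipschitzOnWith (2 / ε) (fun z : V => ‖z‖⁻¹ • z) {z | (ε : ℝ) ≤ ‖z‖} := by
  rw [lipschitzOnWith_iff_dist_le_mul]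
  intro a ha b hb
  simp only [mem_setOf_eq] at ha hb
  have hε' : (0 : ℝ) < ε := hε
  have hna : (0 : ℝ) < ‖a‖ := lt_of_lt_of_le hε' ha
  have hnb : (0 : ℝ) < ‖b‖ := lt_of_lt_of_le hε' hb
  rw [dist_eq_norm, dist_eq_norm]
  have key : ‖a‖⁻¹ • a - ‖b‖⁻¹ • b = ‖a‖⁻¹ • (a - b) + (‖a‖⁻¹ - ‖b‖⁻¹) • b := by
    rw [smul_sub, sub_smul]; abel
  rw [key]
  have h1 : ‖‖a‖⁻¹ • (a - b)‖ ≤ ‖a - b‖ / ε := by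
    rw [norm_smul, norm_inv, norm_norm]
    rw [div_eq_inv_mul]
    apply mul_le_mul _ le_rfl (norm_nonneg _) (by positivity)
    exact inv_anti₀ hε' ha
  have h2 : ‖(‖a‖⁻¹ - ‖b‖⁻¹) • b‖ ≤ ‖a - b‖ / ε := by
    rw [norm_smul, Real.norm_eq_abs]
    have : |‖a‖⁻¹ - ‖b‖⁻¹| = |‖b‖ - ‖a‖| / (‖a‖ * ‖b‖) := by
      rw [inv_sub_inv hna.ne' hnb.ne', abs_div,
        abs_of_pos (by positivity : (0:ℝ) < ‖a‖ * ‖b‖)]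
    rw [this]
    have hub : |‖b‖ - ‖a‖| ≤ ‖a - b‖ := by
      rw [abs_sub_comm]
      exact abs_norm_sub_norm_le a b
    calc |‖b‖ - ‖a‖| / (‖a‖ * ‖b‖) * ‖b‖ = |‖b‖ - ‖a‖| / ‖a‖ := by
          field_simp
      _ ≤ ‖a - b‖ / ε := div_le_div₀ (norm_nonneg _) hub hε' ha
  calc ‖‖a‖⁻¹ • (a - b) + (‖a‖⁻¹ - ‖b‖⁻¹) • b‖
      ≤ ‖‖a‖⁻¹ • (a - b)‖ + ‖(‖a‖⁻¹ - ‖b‖⁻¹) • b‖ := norm_add_le _ _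
    _ ≤ ‖a - b‖ / ε + ‖a - b‖ / ε := add_le_add h1 h2
    _ = ((2 / ε : ℝ≥0) : ℝ) * ‖a - b‖ := by
        push_cast
        ring

lemma lipschitzOnWith_smul_piece {c : ℕ} {V : Type u} [NormedAddCommGroup V] [NormedSpace ℝ V]
    (g : EuclideanSpace ℝ (Fin c) → V) (A : Set (EuclideanSpace ℝ (Fin c))) (K R : ℝ≥0)
    (hg : LipschitzOnWith K g A) (hb : ∀ a ∈ A, ‖g a‖ ≤ 1) :
    LipschitzOnWith (1 + R * K) (fun q : ℝ × (EuclideanSpace ℝ (Fin c)) => q.1 • g q.2)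
      ((Icc (-(R:ℝ)) (R:ℝ)) ×ˢ A) := by
  rw [lipschitzOnWith_iff_dist_le_mul]
  rintro ⟨t, u⟩ ⟨ht, hu⟩ ⟨t', u'⟩ ⟨ht', hu'⟩
  simp only [mem_Icc] at ht ht'
  rw [dist_eq_norm]
  have key : t • g u - t' • g u' = (t - t') • g u + t' • (g u - g u') := by
    rw [sub_smul, smul_sub]; abel
  rw [key]
  have hd := (lipschitzOnWith_iff_dist_le_mul.1 hg) u hu u' hu'
  have hdp : dist u u' ≤ dist (t, u) (t', u') := by
    rw [Prod.dist_eq]; exact le_max_right _ _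
  have htp : dist t t' ≤ dist (t, u) (t', u') := by
    rw [Prod.dist_eq]; exact le_max_left _ _
  calc ‖(t - t') • g u + t' • (g u - g u')‖
      ≤ ‖(t - t') • g u‖ + ‖t' • (g u - g u')‖ := norm_add_le _ _
    _ ≤ |t - t'| * 1 + (R : ℝ) * ((K : ℝ) * dist u u') := by
        apply add_le_add
        · rw [norm_smul, Real.norm_eq_abs]
          exact mul_le_mul_of_nonneg_left (hb u hu) (abs_nonneg _)
        · rw [norm_smul, Real.norm_eq_abs]
          apply mul_le_mul (abs_le.2 ⟨ht'.1, ht'.2⟩) _ (norm_nonneg _) R.coe_nonneg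
          rw [← dist_eq_norm]
          exact hd
    _ ≤ dist (t, u) (t', u') + (R : ℝ) * ((K : ℝ) * dist (t, u) (t', u')) := by
        apply add_le_add
        · rw [mul_one, ← Real.dist_eq]
          exact htp
        · exact mul_le_mul_of_nonneg_left
            (mul_le_mul_of_nonneg_left hdp K.coe_nonneg) R.coe_nonneg
    _ = ((1 + R * K : ℝ≥0) : ℝ) * dist (t, u) (t', u') := by push_cast; ring

lemma LipPieces.usec_image {c : ℕ} {V : Type u} {W : Type v} [NormedAddCommGroup V]
    [NormedSpace ℝ V] [NormedAddCommGroup W] [NormedSpace ℝ W] (π : V →L[ℝ] W) {s : Set V}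
    (h : LipPieces c (usec s)) : LipPieces c (usec (π '' s)) := by
  obtain ⟨ι, hι, A, g, K, hLip, hB, hcov⟩ := h
  have hεpos : ∀ q : ℕ, (0 : ℝ≥0) < (q + 1 : ℝ≥0)⁻¹ := by
    intro q
    positivity
  refine ⟨ι × ℕ, inferInstance,
    fun p => A p.1 ∩ (g p.1) ⁻¹' {z : V | (((p.2 + 1 : ℝ≥0)⁻¹ : ℝ≥0) : ℝ) ≤ ‖π z‖},
    fun p a => ‖π (g p.1 a)‖⁻¹ • π (g p.1 a),
    fun p => (2 / (p.2 + 1 : ℝ≥0)⁻¹ * ‖π‖₊) * K p.1, ?_, ?_, ?_⟩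
  · rintro ⟨i, q⟩
    have h3 := lipschitzOnWith_normalize (V := W) (hεpos q)
    have hπlip : LipschitzOnWith ‖π‖₊ (⇑π)
        ((⇑π) ⁻¹' {w : W | (((q + 1 : ℝ≥0)⁻¹ : ℝ≥0) : ℝ) ≤ ‖w‖}) :=
      π.lipschitz.lipschitzOnWith
    have h2 : LipschitzOnWith (2 / (q + 1 : ℝ≥0)⁻¹ * ‖π‖₊) (fun z : V => ‖π z‖⁻¹ • π z)
        (π ⁻¹' {w : W | (((q + 1 : ℝ≥0)⁻¹ : ℝ≥0) : ℝ) ≤ ‖w‖}) :=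
      h3.comp hπlip (fun z hz => hz)
    exact h2.comp ((hLip i).mono inter_subset_left) (fun a ha => ha.2)
  · rintro ⟨i, q⟩ a _
    exact norm_normalize_le _
  · rintro w hw
    obtain ⟨x', ⟨x, hx, rfl⟩, y', ⟨y, hy, rfl⟩, hne, rfl⟩ := hw
    have hxy : x ≠ y := fun h => hne (by rw [h])
    have hu : ‖x - y‖⁻¹ • (x - y) ∈ usec s := ⟨x, hx, y, hy, hxy, rfl⟩
    obtain ⟨i, a, ha, hga⟩ : ∃ i a, a ∈ A i ∧ g i a = ‖x - y‖⁻¹ • (x - y) := by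
      rcases mem_iUnion.1 (hcov hu) with ⟨i, hi⟩
      rcases hi with ⟨a, ha, hga⟩
      exact ⟨i, a, ha, hga⟩
    set u : V := ‖x - y‖⁻¹ • (x - y) with hudef
    have hnorm0 : ‖x - y‖ ≠ 0 := norm_ne_zero_iff.2 (sub_ne_zero.2 hxy)
    have hπu : π u = ‖x - y‖⁻¹ • (π x - π y) := by
      rw [hudef, map_smul, map_sub]
    have hπune : π u ≠ 0 := by
      rw [hπu]
      exact smul_ne_zero (inv_ne_zero hnorm0) (sub_ne_zero.2 hne)
    have hπupos : (0 : ℝ) < ‖π u‖ := norm_pos_iff.2 hπune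
    obtain ⟨q, hq⟩ := exists_nat_one_div_lt hπupos
    have hq' : (((q + 1 : ℝ≥0)⁻¹ : ℝ≥0) : ℝ) ≤ ‖π u‖ := by
      push_cast
      rw [← one_div]
      exact le_of_lt (by exact_mod_cast hq)
    apply mem_iUnion.2
    refine ⟨(i, q), a, ⟨ha, ?_⟩, ?_⟩
    · show (((q + 1 : ℝ≥0)⁻¹ : ℝ≥0) : ℝ) ≤ ‖π (g i a)‖
      rw [hga]
      exact hq'
    · show ‖π (g i a)‖⁻¹ • π (g i a) = ‖π x - π y‖⁻¹ • (π x - π y)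
      rw [hga, hπu]
      exact normalize_smul_pos (by positivity) _

lemma exists_injective_linear_of_finrank_le {V : Type u} [NormedAddCommGroup V]
    [NormedSpace ℝ V] [FiniteDimensional ℝ V] {D : ℕ} (h : Module.finrank ℝ V ≤ D) :
    ∃ π : V →ₗ[ℝ] EuclideanSpace ℝ (Fin D), Function.Injective π := by
  set N := Module.finrank ℝ V
  let pad : (Fin N → ℝ) →ₗ[ℝ] (Fin D → ℝ) :=
    { toFun := fun v => fun j => if hj : (j : ℕ) < N then v ⟨j, hj⟩ else 0
      map_add' := by
        intro u v
        funext j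
        by_cases hj : (j : ℕ) < N <;> simp [hj]
      map_smul' := by
        intro t v
        funext j
        by_cases hj : (j : ℕ) < N <;> simp [hj] }
  have hpad : Function.Injective pad := by
    intro u v huv
    funext i
    have := congrFun huv ⟨(i : ℕ), lt_of_lt_of_le i.2 h⟩
    simpa [pad, i.2] using this
  refine ⟨(WithLp.linearEquiv 2 ℝ (Fin D → ℝ)).symm.toLinearMap ∘ₗ pad ∘ₗ
    (Module.finBasis ℝ V).equivFun.toLinearMap, ?_⟩
  simp only [LinearMap.coe_comp, LinearEquiv.coe_coe]
  exact (WithLp.linearEquiv 2 ℝ (Fin D → ℝ)).symm.injective.comp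
    (hpad.comp (Module.finBasis ℝ V).equivFun.injective)

lemma exists_injOn_toEuclidean {c D : ℕ} (hcD : c + 1 ≤ D) :
    ∀ N : ℕ, ∀ {V : Type u} [NormedAddCommGroup V] [NormedSpace ℝ V] [FiniteDimensional ℝ V],
      Module.finrank ℝ V ≤ N → ∀ s : Set V, LipPieces c (usec s) →
      ∃ π : V →ₗ[ℝ] EuclideanSpace ℝ (Fin D), InjOn π s := by
  intro N
  induction N with
  | zero =>
    intro V _ _ _ hV s _
    obtain ⟨π, hπ⟩ := exists_injective_linear_of_finrank_le (hV.trans (Nat.zero_le D))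
    exact ⟨π, hπ.injOn⟩
  | succ N ih =>
    intro V _ _ _ hV s hs
    by_cases hfr : Module.finrank ℝ V ≤ D
    · obtain ⟨π, hπ⟩ := exists_injective_linear_of_finrank_le hfr
      exact ⟨π, hπ.injOn⟩
    by_cases hse : usec s = ∅
    · refine ⟨0, fun x hx y hy _ => ?_⟩
      by_contra hne
      have : ‖x - y‖⁻¹ • (x - y) ∈ usec s := ⟨x, hx, y, hy, hne, rfl⟩
      rw [hse] at this
      exact this
    obtain ⟨ι, hι, A, g, K, hLip, hB, hcov⟩ := hs
    set B : Set V := {w | ∃ t : ℝ, ∃ u ∈ usec s, w = t • u} with hBdef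
    have hBdim : dimH B ≤ ((c + 1 : ℕ) : ℝ≥0∞) := by
      have hsub : B ⊆ ⋃ p : ℕ × ι,
          (fun q : ℝ × (EuclideanSpace ℝ (Fin c)) => q.1 • g p.2 q.2) ''
            ((Icc (-(p.1 : ℝ)) (p.1 : ℝ)) ×ˢ A p.2) := by
        rintro w ⟨t, u, hu, rfl⟩
        obtain ⟨i, a, ha, hga⟩ : ∃ i a, a ∈ A i ∧ g i a = u := by
          rcases mem_iUnion.1 (hcov hu) with ⟨i, hi⟩
          rcases hi with ⟨a, ha, hga⟩
          exact ⟨i, a, ha, hga⟩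
        apply mem_iUnion.2
        refine ⟨(⌈|t|⌉₊, i), (t, a), ⟨?_, ha⟩, by simp [hga]⟩
        simp only [mem_Icc]
        have h1 : |t| ≤ ((⌈|t|⌉₊ : ℕ) : ℝ) := Nat.le_ceil _
        constructor
        · linarith [neg_abs_le t]
        · linarith [le_abs_self t]
      calc dimH B ≤ dimH (⋃ p : ℕ × ι,
            (fun q : ℝ × (EuclideanSpace ℝ (Fin c)) => q.1 • g p.2 q.2) ''
              ((Icc (-(p.1 : ℝ)) (p.1 : ℝ)) ×ˢ A p.2)) := dimH_mono hsub
        _ = ⨆ p : ℕ × ι, dimH ((fun q : ℝ × (EuclideanSpace ℝ (Fin c)) => q.1 • g p.2 q.2) ''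
              ((Icc (-(p.1 : ℝ)) (p.1 : ℝ)) ×ˢ A p.2)) := dimH_iUnion _
        _ ≤ ((c + 1 : ℕ) : ℝ≥0∞) := by
            apply iSup_le
            rintro ⟨R, i⟩
            have hLp := lipschitzOnWith_smul_piece (g i) (A i) (K i) R (hLip i) (hB i)
            calc dimH _ ≤ dimH ((Icc (-(R : ℝ)) (R : ℝ)) ×ˢ A i) := hLp.dimH_image_le
              _ ≤ dimH (univ : Set (ℝ × EuclideanSpace ℝ (Fin c))) := dimH_mono (subset_univ _)
              _ = ((c + 1 : ℕ) : ℝ≥0∞) := by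
                  rw [Real.dimH_univ_eq_finrank]
                  congr 1
                  rw [Module.finrank_prod, finrank_euclideanSpace_fin, Module.finrank_self]
                  omega
    have hlt : dimH B < (Module.finrank ℝ V : ℝ≥0∞) := by
      apply lt_of_le_of_lt hBdim
      exact_mod_cast (by omega : c + 1 < Module.finrank ℝ V)
    have hdense := dense_compl_of_dimH_lt_finrank hlt
    have : Nonempty V := ⟨0⟩
    obtain ⟨v, hv⟩ : ∃ v, v ∉ B := hdense.nonempty.imp (fun _ h => h)
    have hv0 : v ≠ 0 := by
      rintro rfl
      obtain ⟨u0, hu0⟩ := Set.nonempty_iff_ne_empty.2 hse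
      exact hv ⟨0, u0, hu0, (zero_smul ℝ u0).symm⟩
    obtain ⟨W, hW⟩ := Submodule.exists_isCompl (Submodule.span ℝ {v})
    set π₁ := Submodule.linearProjOfIsCompl W (Submodule.span ℝ {v}) hW.symm with hπ₁def
    have hker : LinearMap.ker π₁ = Submodule.span ℝ {v} :=
      Submodule.linearProjOfIsCompl_ker hW.symm
    have hInj1 : InjOn π₁ s := by
      intro x hx y hy hxy
      by_contra hne
      have hsubne : x - y ≠ 0 := sub_ne_zero.2 hne
      have hmem : x - y ∈ Submodule.span ℝ {v} := by
        rw [← hker, LinearMap.mem_ker, map_sub, hxy, sub_self]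
      obtain ⟨t, ht⟩ := Submodule.mem_span_singleton.1 hmem
      have ht0 : t ≠ 0 := by
        rintro rfl
        rw [zero_smul] at ht
        exact hsubne ht.symm
      apply hv
      have hnorm0 : ‖x - y‖ ≠ 0 := norm_ne_zero_iff.2 hsubne
      refine ⟨t⁻¹ * ‖x - y‖, ‖x - y‖⁻¹ • (x - y), ⟨x, hx, y, hy, hne, rfl⟩, ?_⟩
      rw [smul_smul, mul_assoc, mul_inv_cancel₀ hnorm0, mul_one, ← ht, inv_smul_smul₀ ht0]
    have hfrW : Module.finrank ℝ W ≤ N := by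
      have h1 := Submodule.finrank_add_eq_of_isCompl hW
      have h2 : Module.finrank ℝ (Submodule.span ℝ {v}) = 1 := finrank_span_singleton hv0
      omega
    set π₁L : V →L[ℝ] W := LinearMap.toContinuousLinearMap π₁ with hπ₁L
    have hs' : LipPieces c (usec ((π₁L : V → W) '' s)) :=
      LipPieces.usec_image π₁L ⟨ι, hι, A, g, K, hLip, hB, hcov⟩
    obtain ⟨ρ, hρ⟩ := ih hfrW ((π₁L : V → W) '' s) hs'
    refine ⟨ρ ∘ₗ π₁, ?_⟩
    have hmap : MapsTo π₁ s ((π₁L : V → W) '' s) := by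
      intro x hx
      exact ⟨x, hx, rfl⟩
    have := hρ.comp hInj1 hmap
    exact this

lemma lipschitzOnWith_sub_prod {α : Type u} {β : Type v} {V : Type w} [PseudoMetricSpace α]
    [PseudoMetricSpace β] [NormedAddCommGroup V] {f : α → V} {g : β → V} {A : Set α} {B : Set β}
    {K1 K2 : ℝ≥0} (hf : LipschitzOnWith K1 f A) (hg : LipschitzOnWith K2 g B) :
    LipschitzOnWith (K1 + K2) (fun p : α × β => f p.1 - g p.2) (A ×ˢ B) := by
  rw [lipschitzOnWith_iff_dist_le_mul]
  rintro ⟨x1, y1⟩ ⟨hx1, hy1⟩ ⟨x2, y2⟩ ⟨hx2, hy2⟩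
  calc dist (f x1 - g y1) (f x2 - g y2) ≤ dist (f x1) (f x2) + dist (g y1) (g y2) :=
        dist_sub_sub_le _ _ _ _
    _ ≤ (K1 : ℝ) * dist x1 x2 + (K2 : ℝ) * dist y1 y2 :=
        add_le_add ((lipschitzOnWith_iff_dist_le_mul.1 hf) x1 hx1 x2 hx2)
          ((lipschitzOnWith_iff_dist_le_mul.1 hg) y1 hy1 y2 hy2)
    _ ≤ (K1 : ℝ) * dist (x1, y1) (x2, y2) + (K2 : ℝ) * dist (x1, y1) (x2, y2) := by
        apply add_le_add
        · exact mul_le_mul_of_nonneg_left (by rw [Prod.dist_eq]; exact le_max_left _ _)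
            K1.coe_nonneg
        · exact mul_le_mul_of_nonneg_left (by rw [Prod.dist_eq]; exact le_max_right _ _)
            K2.coe_nonneg
    _ = ((K1 + K2 : ℝ≥0) : ℝ) * dist (x1, y1) (x2, y2) := by push_cast; ring

variable {m : ℕ} {Ω : Type u} [TopologicalSpace Ω] [T2Space Ω] [SecondCountableTopology Ω]
  [ChartedSpace (EuclideanSpace ℝ (Fin m)) Ω]
  [IsManifold (𝓘(ℝ, EuclideanSpace ℝ (Fin m))) (⊤ : ℕ∞) Ω]

/-- local Lipschitz chart data for a smooth map into a normed space -/
lemma exists_lip_chart {V : Type v} [NormedAddCommGroup V] [NormedSpace ℝ V]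
    {F : Ω → V} (hF : ContMDiff (𝓘(ℝ, EuclideanSpace ℝ (Fin m))) (𝓘(ℝ, V)) (⊤ : ℕ∞) F) (x : Ω) :
    ∃ (r : ℝ) (K : ℝ≥0), 0 < r ∧
      LipschitzOnWith K (F ∘ (extChartAt (𝓘(ℝ, EuclideanSpace ℝ (Fin m))) x).symm)
        (Metric.ball ((extChartAt (𝓘(ℝ, EuclideanSpace ℝ (Fin m))) x) x) r) ∧
      Metric.ball ((extChartAt (𝓘(ℝ, EuclideanSpace ℝ (Fin m))) x) x) r ⊆
        (extChartAt (𝓘(ℝ, EuclideanSpace ℝ (Fin m))) x).target := by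
  set I := 𝓘(ℝ, EuclideanSpace ℝ (Fin m))
  set φ := extChartAt I x with hφ
  have hsm : ContDiffOn ℝ ((⊤ : ℕ∞) : WithTop ℕ∞) (F ∘ φ.symm) φ.target := by
    have h := (contMDiff_iff.1 hF).2 x (F x)
    simp only [extChartAt_model_space_eq_id, PartialEquiv.refl_coe, Function.id_comp,
      PartialEquiv.refl_source, preimage_univ, inter_univ] at h
    exact h
  have hmem : φ x ∈ φ.target := mem_extChartAt_target x
  have hopen : IsOpen φ.target := isOpen_extChartAt_target x
  obtain ⟨r0, hr0, hball0⟩ := Metric.isOpen_iff.1 hopen _ hmem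
  have hcd : ContDiffWithinAt ℝ 1 (F ∘ φ.symm) (Metric.ball (φ x) r0) (φ x) :=
    ((hsm.mono hball0).contDiffWithinAt (Metric.mem_ball_self hr0)).of_le
      (by exact_mod_cast (le_top : (1 : ℕ∞) ≤ ⊤))
  obtain ⟨K, t, ht, hlip⟩ := hcd.exists_lipschitzOnWith (convex_ball _ _)
  rw [(Metric.isOpen_ball).nhdsWithin_eq (Metric.mem_ball_self hr0)] at ht
  obtain ⟨r1, hr1, hball1⟩ := Metric.mem_nhds_iff.1 ht
  refine ⟨min r0 r1, K, lt_min hr0 hr1, hlip.mono ?_, ?_⟩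
  · exact (Metric.ball_subset_ball (min_le_right _ _)).trans hball1
  · exact (Metric.ball_subset_ball (min_le_left _ _)).trans hball0

lemma lipPieces_usec_range {V : Type v} [NormedAddCommGroup V] [NormedSpace ℝ V]
    {F : Ω → V} (hF : ContMDiff (𝓘(ℝ, EuclideanSpace ℝ (Fin m))) (𝓘(ℝ, V)) (⊤ : ℕ∞) F) :
    LipPieces (2 * m) (usec (range F)) := by
  classical
  set I := 𝓘(ℝ, EuclideanSpace ℝ (Fin m))
  choose r K hr hlip hball using exists_lip_chart hF
  set B : Ω → Set (EuclideanSpace ℝ (Fin m)) := fun x => Metric.ball ((extChartAt I x) x) (r x)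
    with hB
  set W : Ω → Set Ω := fun x => (extChartAt I x).source ∩ (extChartAt I x) ⁻¹' (B x) with hW
  have hWnhds : ∀ x : Ω, W x ∈ nhds x := by
    intro x
    have hopen : IsOpen (W x) :=
      (continuousOn_extChartAt x).isOpen_inter_preimage (isOpen_extChartAt_source x)
        Metric.isOpen_ball
    exact hopen.mem_nhds ⟨mem_extChartAt_source x, Metric.mem_ball_self (hr x)⟩
  obtain ⟨T, hTc, hTcov⟩ := TopologicalSpace.countable_cover_nhds hWnhds
  rcases T.eq_empty_or_nonempty with rfl | hTne
  · have hemp : IsEmpty Ω := by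
      constructor
      intro a
      have := hTcov ▸ mem_univ a
      simpa using this
    refine ⟨Empty, inferInstance, fun i => i.elim, fun i => i.elim, fun i => i.elim,
      fun i => i.elim, fun i => i.elim, ?_⟩
    rintro w ⟨x', ⟨a, rfl⟩, _⟩
    exact hemp.elim a
  obtain ⟨c, hc⟩ := hTc.exists_eq_range hTne
  have hfr : Module.finrank ℝ (EuclideanSpace ℝ (Fin (2 * m))) =
      Module.finrank ℝ (EuclideanSpace ℝ (Fin m) × EuclideanSpace ℝ (Fin m)) := by
    rw [finrank_euclideanSpace_fin, Module.finrank_prod, finrank_euclideanSpace_fin]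
    omega
  set e2 : EuclideanSpace ℝ (Fin (2 * m)) ≃L[ℝ]
      EuclideanSpace ℝ (Fin m) × EuclideanSpace ℝ (Fin m) :=
    ContinuousLinearEquiv.ofFinrankEq hfr with he2
  set G : Ω → EuclideanSpace ℝ (Fin m) → V := fun x => F ∘ (extChartAt I x).symm with hG
  refine ⟨(ℕ × ℕ) × ℕ, inferInstance,
    fun p => e2 ⁻¹' ((B (c p.1.1) ×ˢ B (c p.1.2)) ∩
      {q : EuclideanSpace ℝ (Fin m) × EuclideanSpace ℝ (Fin m) |
        (((p.2 + 1 : ℝ≥0)⁻¹ : ℝ≥0) : ℝ) ≤ ‖G (c p.1.1) q.1 - G (c p.1.2) q.2‖}),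
    fun p w => ‖G (c p.1.1) (e2 w).1 - G (c p.1.2) (e2 w).2‖⁻¹ •
      (G (c p.1.1) (e2 w).1 - G (c p.1.2) (e2 w).2),
    fun p => (2 / (p.2 + 1 : ℝ≥0)⁻¹ * (K (c p.1.1) + K (c p.1.2))) *
      ‖(e2 : EuclideanSpace ℝ (Fin (2 * m)) →L[ℝ]
          EuclideanSpace ℝ (Fin m) × EuclideanSpace ℝ (Fin m))‖₊, ?_, ?_, ?_⟩
  · rintro ⟨⟨i, j⟩, q⟩
    have hεpos : (0 : ℝ≥0) < (q + 1 : ℝ≥0)⁻¹ := by positivity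
    have hsub : LipschitzOnWith (K (c i) + K (c j))
        (fun p : EuclideanSpace ℝ (Fin m) × EuclideanSpace ℝ (Fin m) =>
          G (c i) p.1 - G (c j) p.2) (B (c i) ×ˢ B (c j)) :=
      lipschitzOnWith_sub_prod (hlip (c i)) (hlip (c j))
    have hnorm := lipschitzOnWith_normalize (V := V) hεpos
    have hcomp1 : LipschitzOnWith (2 / (q + 1 : ℝ≥0)⁻¹ * (K (c i) + K (c j)))
        ((fun z : V => ‖z‖⁻¹ • z) ∘ (fun p : EuclideanSpace ℝ (Fin m) ×
          EuclideanSpace ℝ (Fin m) => G (c i) p.1 - G (c j) p.2))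
        ((B (c i) ×ˢ B (c j)) ∩
          {q' : EuclideanSpace ℝ (Fin m) × EuclideanSpace ℝ (Fin m) |
            (((q + 1 : ℝ≥0)⁻¹ : ℝ≥0) : ℝ) ≤ ‖G (c i) q'.1 - G (c j) q'.2‖}) :=
      hnorm.comp (hsub.mono inter_subset_left) (fun p hp => hp.2)
    exact hcomp1.comp ((e2.lipschitz).lipschitzOnWith
      (s := e2 ⁻¹' ((B (c i) ×ˢ B (c j)) ∩
        {q' : EuclideanSpace ℝ (Fin m) × EuclideanSpace ℝ (Fin m) |
          (((q + 1 : ℝ≥0)⁻¹ : ℝ≥0) : ℝ) ≤ ‖G (c i) q'.1 - G (c j) q'.2‖})))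
      (fun w hw => hw)
  · rintro ⟨⟨i, j⟩, q⟩ a _
    exact norm_normalize_le _
  · rintro w ⟨x', ⟨a, rfl⟩, y', ⟨b, rfl⟩, hne, rfl⟩
    have ha : a ∈ ⋃ x ∈ T, W x := hTcov ▸ mem_univ a
    have hb : b ∈ ⋃ x ∈ T, W x := hTcov ▸ mem_univ b
    obtain ⟨xi, hxi, hai⟩ := mem_iUnion₂.1 ha
    obtain ⟨xj, hxj, hbj⟩ := mem_iUnion₂.1 hb
    rw [hc] at hxi hxj
    obtain ⟨i, rfl⟩ := hxi
    obtain ⟨j, rfl⟩ := hxj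
    have hFa : G (c i) ((extChartAt I (c i)) a) = F a := by
      rw [hG]
      simp only [Function.comp_apply]
      rw [PartialEquiv.left_inv _ hai.1]
    have hFb : G (c j) ((extChartAt I (c j)) b) = F b := by
      rw [hG]
      simp only [Function.comp_apply]
      rw [PartialEquiv.left_inv _ hbj.1]
    have hpos : (0 : ℝ) < ‖F a - F b‖ := norm_pos_iff.2 (sub_ne_zero.2 hne)
    obtain ⟨q, hq⟩ := exists_nat_one_div_lt hpos
    have hq' : (((q + 1 : ℝ≥0)⁻¹ : ℝ≥0) : ℝ) ≤ ‖F a - F b‖ := by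
      push_cast
      rw [← one_div]
      exact le_of_lt (by exact_mod_cast hq)
    apply mem_iUnion.2
    refine ⟨((i, j), q), e2.symm ((extChartAt I (c i)) a, (extChartAt I (c j)) b), ?_, ?_⟩
    · show e2.symm _ ∈ e2 ⁻¹' _
      rw [mem_preimage, ContinuousLinearEquiv.apply_symm_apply]
      refine ⟨⟨hai.2, hbj.2⟩, ?_⟩
      show (((q + 1 : ℝ≥0)⁻¹ : ℝ≥0) : ℝ) ≤
        ‖G (c i) ((extChartAt I (c i)) a) - G (c j) ((extChartAt I (c j)) b)‖
      rw [hFa, hFb]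
      exact hq'
    · show ‖G (c i) (e2 (e2.symm _)).1 - G (c j) (e2 (e2.symm _)).2‖⁻¹ • _ = _
      rw [ContinuousLinearEquiv.apply_symm_apply]
      simp only
      rw [hFa, hFb]

lemma exists_linear_injOn_range {V : Type v} [NormedAddCommGroup V] [NormedSpace ℝ V]
    [FiniteDimensional ℝ V] {F : Ω → V}
    (hF : ContMDiff (𝓘(ℝ, EuclideanSpace ℝ (Fin m))) (𝓘(ℝ, V)) (⊤ : ℕ∞) F) :
    ∃ π : V →ₗ[ℝ] EuclideanSpace ℝ (Fin (2 * m + 1)), InjOn π (range F) :=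
  exists_injOn_toEuclidean (c := 2 * m) (D := 2 * m + 1) (by omega)
    (Module.finrank ℝ V) le_rfl (range F) (lipPieces_usec_range hF)

/-- a smooth map to `ℝ^{2m+1}` injective on a given compact set and supported in a given
neighborhood of it -/
lemma exists_level_map (s U : Set Ω) (hs : IsCompact s) (hU : IsOpen U) (hsU : s ⊆ U) :
    ∃ g : Ω → EuclideanSpace ℝ (Fin (2 * m + 1)),
      ContMDiff (𝓘(ℝ, EuclideanSpace ℝ (Fin m))) (𝓘(ℝ, EuclideanSpace ℝ (Fin (2 * m + 1)))) (⊤ : ℕ∞) g ∧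
      InjOn g s ∧ ∀ x ∉ U, g x = 0 := by
  classical
  set I := 𝓘(ℝ, EuclideanSpace ℝ (Fin m))
  haveI : LocallyCompactSpace Ω :=
    ChartedSpace.locallyCompactSpace (EuclideanSpace ℝ (Fin m)) Ω
  haveI : SigmaCompactSpace Ω := inferInstance
  obtain ⟨ι', fs, hsubord⟩ := SmoothBumpCovering.exists_isSubordinate I hs.isClosed
    (U := fun _ => U) (fun x hx => hU.mem_nhds (hsU hx))
  set J : Set ι' := {i | (Function.support ⇑(fs.toFun i) ∩ s).Nonempty} with hJ
  have hJfin : J.Finite := fs.locallyFinite.finite_nonempty_inter_compact hs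
  haveI : Fintype ↥J := hJfin.fintype
  set E : Ω → (↥J → EuclideanSpace ℝ (Fin m) × ℝ) :=
    fun x i => (fs i x • extChartAt I (fs.c i) x, fs i x) with hE
  have hEsm : ContMDiff I (𝓘(ℝ, ↥J → EuclideanSpace ℝ (Fin m) × ℝ)) (⊤ : ℕ∞) E :=
    contMDiff_pi_space.2 fun i =>
      ((fs i).contMDiff_smul contMDiffOn_extChartAt).prodMk_space (fs i).contMDiff
  have hEinj : InjOn E s := by
    intro x hx y hy h
    set i := fs.ind x hx with hi
    have hiJ : i ∈ J := ⟨x, fs.mem_support_ind x hx, hx⟩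
    have hcomp := congrFun h ⟨i, hiJ⟩
    simp only [hE, Prod.mk.injEq] at hcomp
    obtain ⟨h₁, h₂⟩ := hcomp
    rw [fs.apply_ind x hx] at h₂
    rw [← h₂, fs.apply_ind x hx, one_smul, one_smul] at h₁
    have hysrc := fs.mem_extChartAt_source_of_eq_one h₂.symm
    exact (extChartAt I (fs.c i)).injOn (fs.mem_extChartAt_ind_source x hx) hysrc h₁
  have hE0 : ∀ x ∉ U, E x = 0 := by
    intro x hx
    funext i
    have hxi : fs i x = 0 := by
      by_contra hne
      exact hx (hsubord i (subset_closure (Function.mem_support.2 hne)))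
    simp only [hE, hxi, zero_smul]
    rfl
  obtain ⟨π, hπ⟩ := exists_linear_injOn_range (m := m) (Ω := Ω) hEsm
  set πL := LinearMap.toContinuousLinearMap π with hπL
  refine ⟨fun x => πL (E x), ?_, ?_, ?_⟩
  · exact (πL.contDiff.contMDiff).comp hEsm
  · intro x hx y hy h
    exact hEinj hx hy (hπ (mem_range_self x) (mem_range_self y) h)
  · intro x hx
    show πL (E x) = 0
    rw [hE0 x hx, map_zero]

lemma exists_smooth_injective_euclidean :
    ∃ f : Ω → EuclideanSpace ℝ (Fin (2 * m + 1)),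
      ContMDiff (𝓘(ℝ, EuclideanSpace ℝ (Fin m)))
        (𝓘(ℝ, EuclideanSpace ℝ (Fin (2 * m + 1)))) (⊤ : ℕ∞) f ∧ Function.Injective f := by
  classical
  set I := 𝓘(ℝ, EuclideanSpace ℝ (Fin m))
  haveI : LocallyCompactSpace Ω :=
    ChartedSpace.locallyCompactSpace (EuclideanSpace ℝ (Fin m)) Ω
  haveI : SigmaCompactSpace Ω := inferInstance
  set K := CompactExhaustion.choice Ω with hKdef
  set KP : ℕ → Set Ω := fun j => if j = 0 then (∅ : Set Ω) else K (j - 1) with hKP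
  set KP2 : ℕ → Set Ω := fun j => if j < 2 then (∅ : Set Ω) else K (j - 2) with hKP2
  set S : ℕ → Set Ω := fun j => K (j + 3) \ interior (KP j) with hS
  set Ufam : ℕ → Set Ω := fun j => interior (K (j + 4)) \ KP2 j with hUfam
  have hKP2closed : ∀ j, IsClosed (KP2 j) := by
    intro j
    simp only [hKP2]
    split
    · exact isClosed_empty
    · exact (K.isCompact _).isClosed
  have hScomp : ∀ j, IsCompact (S j) := fun j => (K.isCompact _).diff isOpen_interior
  have hUopen : ∀ j, IsOpen (Ufam j) := fun j => isOpen_interior.sdiff (hKP2closed j)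
  have hSU : ∀ j, S j ⊆ Ufam j := by
    intro j x hx
    refine ⟨K.subset_interior (by omega) hx.1, ?_⟩
    intro hx3
    simp only [hKP2] at hx3
    by_cases hj : j < 2
    · rw [if_pos hj] at hx3
      exact hx3
    · rw [if_neg hj] at hx3
      apply hx.2
      have h1 : K (j - 2) ⊆ interior (K (j - 1)) := by
        have := K.subset_interior_succ (j - 2)
        have he : j - 2 + 1 = j - 1 := by omega
        rwa [he] at this
      have h2 : KP j = K (j - 1) := by
        simp only [hKP]
        rw [if_neg (by omega : ¬ j = 0)]
      rw [h2]
      exact h1 hx3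
  have hmemS : ∀ (l : ℕ) (x : Ω), l ≤ K.find x → K.find x ≤ l + 3 → x ∈ S l := by
    intro l x h1 h2
    constructor
    · exact K.mem_iff_find_le.2 (by omega) 
    · intro hx
      simp only [hKP] at hx
      by_cases hl : l = 0
      · rw [if_pos hl] at hx
        simp at hx
      · rw [if_neg hl] at hx
        have : x ∈ K (l - 1) := interior_subset hx
        have := K.mem_iff_find_le.1 this
        omega
  have hnotU : ∀ (j : ℕ) (x : Ω), (K.find x + 5 ≤ j ∨ j + 5 ≤ K.find x) → x ∉ Ufam j := by
    intro j x hcase hU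
    rcases hcase with hc | hc
    · apply hU.2
      simp only [hKP2]
      rw [if_neg (by omega : ¬ j < 2)]
      exact K.mem_iff_find_le.2 (by omega)
    · have : x ∈ K (j + 4) := interior_subset hU.1
      have := K.mem_iff_find_le.1 this
      omega
  -- the height function
  have hψex : ∀ j : ℕ, ∃ f : ContMDiffMap I (𝓘(ℝ, ℝ)) Ω ℝ (⊤ : ℕ∞),
      EqOn ⇑f 0 ((interior (K (j + 1)))ᶜ) ∧ EqOn ⇑f 1 (K j) ∧ ∀ x, f x ∈ Icc (0 : ℝ) 1 :=
    fun j => exists_contMDiffMap_zero_one_of_isClosed I isOpen_interior.isClosed_compl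
      (K.isCompact j).isClosed
      (disjoint_left.2 fun x hx hxK => hx (K.subset_interior_succ j hxK))
  choose ψ hψ0 hψ1 hψIcc using hψex
  have hψ_one : ∀ (j : ℕ) (x : Ω), x ∈ K j → ψ j x = 1 := fun j x hx => hψ1 j hx
  have hψ_zero : ∀ (j : ℕ) (x : Ω), x ∉ interior (K (j + 1)) → ψ j x = 0 :=
    fun j x hx => hψ0 j hx
  have hθtail : ∀ (x : Ω) (j : ℕ), K.find x ≤ j → 1 - ψ j x = 0 := by
    intro x j hj
    rw [hψ_one j x (K.mem_iff_find_le.2 hj), sub_self]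
  have hlocfinθ : LocallyFinite fun j : ℕ => Function.support (fun x : Ω => 1 - ψ j x) := by
    intro x
    refine ⟨interior (K (K.find x + 1)), isOpen_interior.mem_nhds
      (K.subset_interior_succ _ (K.mem_find x)), ?_⟩
    apply Set.Finite.subset (Set.finite_Iic (K.find x))
    rintro j ⟨y, hy1, hy2⟩
    by_contra hj
    simp only [mem_Iic, not_le] at hj
    apply hy1
    have hyK : y ∈ K j := K.subset (by omega) (interior_subset hy2)
    show (1 : ℝ) - ψ j y = 0
    rw [hψ_one j y hyK, sub_self]
  set h : Ω → ℝ := fun x => ∑ᶠ j : ℕ, (1 - ψ j x) with hh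
  have hhsm : ContMDiff I 𝓘(ℝ, ℝ) (⊤ : ℕ∞) h :=
    contMDiff_finsum (fun j => contMDiff_const.sub (ψ j).contMDiff) hlocfinθ
  have hsupp_at : ∀ x : Ω, (Function.support fun j : ℕ => 1 - ψ j x) ⊆
      ↑(Finset.range (K.find x)) := by
    intro x j hj
    simp only [Finset.coe_range, mem_Iio]
    by_contra hc
    exact hj (hθtail x j (by omega))
  have hval : ∀ x : Ω, h x = ∑ j ∈ Finset.range (K.find x), (1 - ψ j x) :=
    fun x => finsum_eq_sum_of_support_subset _ (hsupp_at x)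
  have hub : ∀ x : Ω, h x ≤ K.find x := by
    intro x
    rw [hval]
    calc ∑ j ∈ Finset.range (K.find x), (1 - ψ j x)
        ≤ ∑ _j ∈ Finset.range (K.find x), (1 : ℝ) := by
          apply Finset.sum_le_sum
          intro j _
          have := (hψIcc j x).1
          linarith
      _ = K.find x := by simp
  have hlb : ∀ x : Ω, (K.find x : ℝ) - 1 ≤ h x := by
    intro x
    rcases Nat.eq_zero_or_pos (K.find x) with h0 | h0
    · rw [hval, h0]
      simp
    rw [hval]
    have hsub : Finset.range (K.find x - 1) ⊆ Finset.range (K.find x) :=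
      Finset.range_subset_range.2 (by omega)
    have hmono : ∑ j ∈ Finset.range (K.find x - 1), (1 - ψ j x)
        ≤ ∑ j ∈ Finset.range (K.find x), (1 - ψ j x) := by
      apply Finset.sum_le_sum_of_subset_of_nonneg hsub
      intro j _ _
      have := (hψIcc j x).2
      linarith
    have hones : ∑ j ∈ Finset.range (K.find x - 1), (1 - ψ j x)
        = ((K.find x - 1 : ℕ) : ℝ) := by
      have hterm : ∀ j ∈ Finset.range (K.find x - 1), (1 : ℝ) - ψ j x = 1 := by
        intro j hj
        rw [Finset.mem_range] at hj
        have hxnot : x ∉ K (j + 1) := by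
          intro hc
          have := K.mem_iff_find_le.1 hc
          omega
        rw [hψ_zero j x (fun hc => hxnot (interior_subset hc)), sub_zero]
      rw [Finset.sum_congr rfl hterm]
      simp
    have hcast : ((K.find x - 1 : ℕ) : ℝ) = (K.find x : ℝ) - 1 := by
      push_cast [Nat.cast_sub h0]
      ring
    linarith [hmono, hones, hcast]
  have hfindclose : ∀ x y : Ω, h x = h y → K.find y ≤ K.find x + 1 := by
    intro x y hxy
    have h1 := hlb y
    have h2 := hub x
    rw [← hxy] at h1
    have : (K.find y : ℝ) ≤ (K.find x : ℝ) + 1 := by linarith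
    exact_mod_cast this
  -- the level maps
  choose g hgsm hginj hg0 using
    fun j => exists_level_map (m := m) (Ω := Ω) (S j) (Ufam j) (hScomp j) (hUopen j) (hSU j)
  have hUlocfin : LocallyFinite Ufam := by
    intro x
    refine ⟨interior (K (K.find x + 4)), isOpen_interior.mem_nhds
      (K.subset_interior (by omega) (K.mem_find x)), ?_⟩
    apply Set.Finite.subset (Set.finite_Iic (K.find x + 6))
    rintro j ⟨y, hy1, hy2⟩
    by_contra hj
    simp only [mem_Iic, not_le] at hj
    apply hy1.2
    simp only [hKP2]
    rw [if_neg (by omega : ¬ j < 2)]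
    exact K.subset (by omega) (interior_subset hy2)
  set σfun : Fin 7 → Ω → EuclideanSpace ℝ (Fin (2 * m + 1)) :=
    fun t x => ∑ᶠ j : ℕ, if j % 7 = (t : ℕ) then g j x else 0 with hσfun
  have hσsupp : ∀ (t : Fin 7) (j : ℕ),
      Function.support (fun x : Ω => if j % 7 = (t : ℕ) then g j x else 0) ⊆ Ufam j := by
    intro t j x hx
    by_contra hc
    apply hx
    show (if j % 7 = (t : ℕ) then g j x else 0) = 0
    by_cases hcond : j % 7 = (t : ℕ)
    · rw [if_pos hcond]
      exact hg0 j x hc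
    · rw [if_neg hcond]
  have hσsm : ∀ t : Fin 7, ContMDiff I 𝓘(ℝ, EuclideanSpace ℝ (Fin (2 * m + 1))) (⊤ : ℕ∞) (σfun t) := by
    intro t
    apply contMDiff_finsum
    · intro j
      by_cases hcond : j % 7 = (t : ℕ)
      · simp only [if_pos hcond]
        exact hgsm j
      · simp only [if_neg hcond]
        exact contMDiff_const
    · exact hUlocfin.subset (hσsupp t)
  set F : Ω → ℝ × (Fin 7 → EuclideanSpace ℝ (Fin (2 * m + 1))) :=
    fun x => (h x, fun t => σfun t x) with hF
  have hFsm : ContMDiff I 𝓘(ℝ, ℝ × (Fin 7 → EuclideanSpace ℝ (Fin (2 * m + 1)))) (⊤ : ℕ∞) F :=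
    hhsm.prodMk_space (contMDiff_pi_space.2 hσsm)
  have hFinj : Function.Injective F := by
    intro x y hxy
    have hhxy : h x = h y := congrArg Prod.fst hxy
    have hσxy : ∀ t : Fin 7, σfun t x = σfun t y :=
      fun t => congrFun (congrArg Prod.snd hxy) t
    have hd1 := hfindclose x y hhxy
    have hd2 := hfindclose y x hhxy.symm
    set l := min (K.find x) (K.find y) with hl
    have hl1 : l ≤ K.find x := min_le_left _ _
    have hl2 : l ≤ K.find y := min_le_right _ _
    have hlchoice : l = K.find x ∨ l = K.find y := by
      rcases le_total (K.find x) (K.find y) with hc | hc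
      · left; rw [hl, min_eq_left hc]
      · right; rw [hl, min_eq_right hc]
    have hl3 : K.find x ≤ l + 1 ∧ K.find y ≤ l + 1 := by omega
    set t : Fin 7 := ⟨l % 7, Nat.mod_lt l (by norm_num)⟩ with ht
    have hval : ∀ z : Ω, l ≤ K.find z → K.find z ≤ l + 1 → σfun t z = g l z := by
      intro z hz1 hz2
      show (∑ᶠ j : ℕ, if j % 7 = (t : ℕ) then g j z else 0) = g l z
      have hsingle : (∑ᶠ j : ℕ, if j % 7 = (t : ℕ) then g j z else 0)
          = (if l % 7 = (t : ℕ) then g l z else 0) := by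
        apply finsum_eq_single
        intro j hj
        by_cases hcond : j % 7 = (t : ℕ)
        · rw [if_pos hcond]
          apply hg0
          apply hnotU
          have htl : (t : ℕ) = l % 7 := rfl
          rw [htl] at hcond
          omega
        · rw [if_neg hcond]
      rw [hsingle, if_pos rfl]
    have hgl : g l x = g l y := by
      rw [← hval x hl1 hl3.1, ← hval y hl2 hl3.2]
      exact hσxy t
    exact hginj l (hmemS l x hl1 (by omega)) (hmemS l y hl2 (by omega)) hgl
  obtain ⟨π, hπ⟩ := exists_linear_injOn_range (m := m) (Ω := Ω) hFsm
  set πL := LinearMap.toContinuousLinearMap π with hπL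
  refine ⟨fun x => πL (F x), (πL.contDiff.contMDiff).comp hFsm, ?_⟩
  intro x y hxy
  exact hFinj (hπ (mem_range_self x) (mem_range_self y) hxy)
end

/-- Let `Ω` be a smooth `m`-dimensional manifold and `k ≥ 2(m+n)`.
Then there is a smooth map `G : Ω → M(n,k)` into the `n × k` real matrices such
that for all distinct `ω ≠ ω'` in `Ω`, the `(2n × k)` matrix obtained by
stacking `G ω` on top of `G ω'` has full rank `2n`. -/
theorem stmt15 {m n k : ℕ} (hk : 2 * (m + n) ≤ k)
    {Ω : Type*} [TopologicalSpace Ω] [T2Space Ω] [SecondCountableTopology Ω]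
    [ChartedSpace (EuclideanSpace ℝ (Fin m)) Ω]
    [IsManifold (𝓘(ℝ, EuclideanSpace ℝ (Fin m))) (⊤ : ℕ∞) Ω] :
    ∃ G : Ω → (Fin n → Fin k → ℝ),
      ContMDiff (𝓘(ℝ, EuclideanSpace ℝ (Fin m))) (𝓘(ℝ, Fin n → Fin k → ℝ)) (⊤ : ℕ∞) G ∧
      ∀ ω ω' : Ω, ω ≠ ω' →
        (Matrix.of (Sum.elim (G ω) (G ω'))).rank = 2 * n := by
  obtain ⟨f, hfsm, hfinj⟩ := exists_smooth_injective_euclidean (m := m) (Ω := Ω)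
  refine ⟨fun ω => gmat n k (2 * m + 1) (f ω), ?_, ?_⟩
  · have hgc : ContDiff ℝ ((⊤ : ℕ∞) : WithTop ℕ∞) (gmat n k (2 * m + 1)) :=
      (contDiff_gmat n k (2 * m + 1)).of_le le_top
    exact hgc.contMDiff.comp hfsm
  · intro ω ω' hne
    exact gmat_rank (by omega) (by omega) (fun h => hne (hfinj h))
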